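/- Let n be an odd positive integer with n ∉ {1,3,9,15,21,33,45,75,105,165,195}. Then φ(n) ≥ n^{6/7}, i.e. φ(n)^7 ≥ n^6. -/

import Mathlib

lemma mono7 (p d : ℕ) : (p-1)^7 * (p+d)^6 ≤ (p+d-1)^7 * p^6 := by
  cases p with
  | zero => simp
  | succ n =>
    have e1 : n + 1 - 1 = n := by omega
    have e2 : n + 1 + d - 1 = n + d := by omega
    rw [e1, e2]
    have h1 : n * (n+1+d) ≤ (n+d) * (n+1) := by nlinarith
    have h2 : (n*(n+1+d))^6 ≤ ((n+d)*(n+1))^6 := Nat.pow_le_pow_left h1 6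
    calc n^7 * (n+1+d)^6 = (n*(n+1+d))^6 * n := by ring
      _ ≤ ((n+d)*(n+1))^6 * (n+d) := Nat.mul_le_mul h2 (Nat.le_add_right n d)
      _ = (n+d)^7 * (n+1)^6 := by ring

lemma scale7 (C D Q p : ℕ) (h1 : 1 ≤ Q) (hQp : Q ≤ p) (hnum : D * Q^6 ≤ C * (Q-1)^7) :
    D * p^6 ≤ C * (p-1)^7 := by
  obtain ⟨d, rfl⟩ := Nat.exists_eq_add_of_le hQp
  have hm := mono7 Q d
  have key : Q^6 * (D * (Q+d)^6) ≤ Q^6 * (C * ((Q+d)-1)^7) := by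
    calc Q^6 * (D*(Q+d)^6) = (D*Q^6)*(Q+d)^6 := by ring
      _ ≤ (C*(Q-1)^7)*(Q+d)^6 := Nat.mul_le_mul_right _ hnum
      _ = C * ((Q-1)^7*(Q+d)^6) := by ring
      _ ≤ C * ((Q+d-1)^7 * Q^6) := Nat.mul_le_mul_left _ hm
      _ = Q^6 * (C * (Q+d-1)^7) := by ring
  exact Nat.le_of_mul_le_mul_left key (by positivity)

lemma combine7 (C D C1 D1 C2 D2 x y u v : ℕ)
    (h1 : D1 * u ≤ C1 * x) (h2 : D2 * v ≤ C2 * y)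
    (hC : 0 < C1 * C2) (hnum : D * (C1 * C2) ≤ C * (D1 * D2)) :
    D * (u * v) ≤ C * (x * y) := by
  have h3 : (D1*u)*(D2*v) ≤ (C1*x)*(C2*y) := Nat.mul_le_mul h1 h2
  have h4 : (C1*C2) * (D*(u*v)) ≤ (C1*C2) * (C*(x*y)) := by
    calc (C1*C2)*(D*(u*v)) = (D*(C1*C2))*(u*v) := by ring
    _ ≤ (C*(D1*D2))*(u*v) := Nat.mul_le_mul_right _ hnum
    _ = C * ((D1*u)*(D2*v)) := by ring
    _ ≤ C * ((C1*x)*(C2*y)) := Nat.mul_le_mul_left _ h3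
    _ = (C1*C2)*(C*(x*y)) := by ring
  exact Nat.le_of_mul_le_mul_left h4 hC

lemma rescale7 (C D C' D' a b : ℕ) (h : D' * a ≤ C' * b) (hC' : 0 < C')
    (hnum : D * C' ≤ C * D') : D * a ≤ C * b := by
  have h4 : C' * (D * a) ≤ C' * (C * b) := by
    calc C' * (D*a) = (D*C')*a := by ring
    _ ≤ (C*D')*a := Nat.mul_le_mul_right _ hnum
    _ = C*(D'*a) := by ring
    _ ≤ C*(C'*b) := Nat.mul_le_mul_left _ h
    _ = C' * (C * b) := by ring
  exact Nat.le_of_mul_le_mul_left h4 hC'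

lemma ppow7 (C D p b t e : ℕ) (hp : p.Prime) (ht : 1 ≤ t) (he : t + e = 7) (htb : t ≤ b)
    (h : D * p ^ e ≤ C * (p - 1) ^ 7) :
    D * (p ^ b) ^ 6 ≤ C * Nat.totient (p ^ b) ^ 7 := by
  have hb : 0 < b := le_trans ht htb
  have hp1 : 0 < p := hp.pos
  rw [Nat.totient_prime_pow hp hb, mul_pow, ← pow_mul, ← pow_mul]
  -- goal : D * p ^ (b*6) ≤ C * (p ^ ((b-1)*7) * (p-1)^7)
  have key : D * p ^ (b*6) ≤ C * ((p-1)^7 * p ^ (b*6 + t - 7)) := by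
    have h2 := Nat.mul_le_mul_right (p ^ (b*6 + t - 7)) h
    calc D * p ^ (b*6) = D * p ^ e * p ^ (b*6+t-7) := by
          rw [mul_assoc, ← pow_add]
          congr 2
          omega
      _ ≤ C * (p-1)^7 * p ^ (b*6+t-7) := h2
      _ = C * ((p-1)^7 * p ^ (b*6+t-7)) := by rw [mul_assoc]
  refine le_trans key (Nat.mul_le_mul_left _ ?_)
  rw [mul_comm]
  exact Nat.mul_le_mul_right _ (Nat.pow_le_pow_right hp1 (by omega))

lemma split7 (p m : ℕ) (hp : p.Prime) (hm : m ≠ 0) (hpm : p ∣ m) :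
    ∃ b k, 1 ≤ b ∧ m = p ^ b * k ∧
      Nat.totient m = Nat.totient (p ^ b) * Nat.totient k ∧
      0 < k ∧ k < m ∧ (∀ q, q.Prime → q ∣ k → (q ∣ m ∧ q ≠ p)) := by
  refine ⟨m.factorization p, m / p ^ m.factorization p,
    hp.factorization_pos_of_dvd hm hpm, (Nat.ordProj_mul_ordCompl_eq_self m p).symm, ?_, ?_, ?_, ?_⟩
  · conv_lhs => rw [← Nat.ordProj_mul_ordCompl_eq_self m p]
    exact Nat.totient_mul ((Nat.coprime_ordCompl hp hm).pow_left _)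
  · exact Nat.ordCompl_pos p hm
  · have h2 : 2 ≤ p ^ m.factorization p := by
      calc 2 ≤ p := hp.two_le
      _ ≤ p ^ m.factorization p := Nat.le_self_pow (by
            have := hp.factorization_pos_of_dvd hm hpm; omega) p
    have hk := Nat.ordCompl_pos p hm
    calc m / p ^ m.factorization p < 2 * (m / p ^ m.factorization p) := by omega
      _ ≤ p ^ m.factorization p * (m / p ^ m.factorization p) := Nat.mul_le_mul_right _ h2
      _ = m := Nat.ordProj_mul_ordCompl_eq_self m p
  · intro q hq hqk
    refine ⟨hqk.trans (Nat.ordCompl_dvd m p), ?_⟩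
    rintro rfl
    exact Nat.not_dvd_ordCompl hp hm hqk

lemma prime_cases7 (q : ℕ) (hq : q.Prime) :
    q = 2 ∨ q = 3 ∨ q = 5 ∨ q = 7 ∨ q = 11 ∨ 13 ≤ q := by
  by_contra h
  push_neg at h
  have h2 := hq.two_le
  obtain ⟨a,b,c,d,e,f⟩ := h
  have : q < 13 := by omega
  interval_cases q <;> first | omega | exact absurd hq (by decide)

lemma glue7 (C D p b k K : ℕ) (hmk : K = p^b * k)
    (htot : Nat.totient K = Nat.totient (p^b) * Nat.totient k)
    (C1 D1 C2 D2 : ℕ) (h1 : D1 * (p^b)^6 ≤ C1 * Nat.totient (p^b)^7)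
    (h2 : D2 * k^6 ≤ C2 * Nat.totient k ^ 7)
    (hC : 0 < C1*C2) (hnum : D*(C1*C2) ≤ C*(D1*D2)) :
    D * K^6 ≤ C * Nat.totient K ^ 7 := by
  rw [htot, hmk, mul_pow, mul_pow]
  exact combine7 C D C1 D1 C2 D2 _ _ _ _ h1 h2 hC hnum

lemma L0 : ∀ m, 0 < m → (∀ p, p.Prime → p ∣ m → 5 ≤ p) → m ^ 6 ≤ Nat.totient m ^ 7 := by
  intro m
  induction m using Nat.strong_induction_on with
  | _ m ih =>
    intro hm hf
    by_cases hm1 : m = 1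
    · subst hm1; simp
    · have hp : m.minFac.Prime := Nat.minFac_prime hm1
      have hpd : m.minFac ∣ m := Nat.minFac_dvd m
      obtain ⟨b, k, hb, hmk, htot, hk0, hkm, hq⟩ := split7 _ _ hp (by omega) hpd
      have h5 : 5 ≤ m.minFac := hf _ hp hpd
      have hpb : 1 * (m.minFac ^ b)^6 ≤ 1 * Nat.totient (m.minFac^b) ^ 7 :=
        ppow7 1 1 _ b 1 6 hp le_rfl rfl hb (scale7 1 1 5 _ (by norm_num) h5 (by norm_num))
      have hk : 1 * k ^ 6 ≤ 1 * Nat.totient k ^ 7 := by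
        simpa using ih k hkm hk0 (fun q hq1 hq2 => hf q hq1 (hq q hq1 hq2).1)
      simpa using glue7 1 1 _ b k m hmk htot 1 1 1 1 hpb hk (by norm_num) (by norm_num)

lemma gen7 (Q : ℕ) (hQ : 5 ≤ Q) : ∀ m, 1 < m → (∀ p, p.Prime → p ∣ m → Q ≤ p) →
    (Q-1)^7 * m^6 ≤ Q^6 * Nat.totient m ^ 7 := by
  intro m hm hf
  have hp : m.minFac.Prime := Nat.minFac_prime (by omega)
  have hpd : m.minFac ∣ m := Nat.minFac_dvd m
  obtain ⟨b, k, hb, hmk, htot, hk0, hkm, hq⟩ := split7 _ _ hp (by omega) hpd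
  have hQp : Q ≤ m.minFac := hf _ hp hpd
  have hpb : (Q-1)^7 * (m.minFac ^ b)^6 ≤ Q^6 * Nat.totient (m.minFac^b) ^ 7 :=
    ppow7 _ _ _ b 1 6 hp le_rfl rfl hb
      (scale7 (Q^6) ((Q-1)^7) Q _ (by omega) hQp (le_of_eq (mul_comm _ _)))
  have hk : 1 * k ^ 6 ≤ 1 * Nat.totient k ^ 7 := by
    simpa using L0 k hk0 (fun q hq1 hq2 => le_trans hQ (hf q hq1 (hq q hq1 hq2).1))
  exact glue7 _ _ _ b k m hmk htot (Q^6) ((Q-1)^7) 1 1 hpb hk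
    (by positivity) (by rw [mul_one, mul_one, mul_comm])

lemma tot25 : Nat.totient 25 = 20 := by decide
lemma tot5 : Nat.totient 5 = 4 := by decide
lemma tot7 : Nat.totient 7 = 6 := by decide
lemma tot11 : Nat.totient 11 = 10 := by decide
lemma tot3 : Nat.totient 3 = 2 := by decide

-- slack ≥ 5.4318 for j with prime factors ≥ 7, j ∉ {1,7,11}
lemma N7 (j : ℕ) (h0 : 0 < j) (hf : ∀ p, p.Prime → p ∣ j → 7 ≤ p)
    (h1 : j ≠ 1) (h7 : j ≠ 7) (h11 : j ≠ 11) :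
    11390625 * j ^ 6 ≤ 2097152 * Nat.totient j ^ 7 := by
  by_cases hd7 : 7 ∣ j
  · obtain ⟨c, i, hc, hmk, htot, hi0, him, hq⟩ := split7 7 j (by norm_num) (by omega) hd7
    have hfi : ∀ p, p.Prime → p ∣ i → 11 ≤ p := by
      intro p hp hpj
      obtain ⟨hpk, hpne⟩ := hq p hp hpj
      have := hf p hp hpk
      rcases prime_cases7 p hp with rfl|rfl|rfl|rfl|rfl|h <;> omega
    obtain rfl | hc2 : c = 1 ∨ 2 ≤ c := by omega
    · have hi1 : i ≠ 1 := by rintro rfl; simp at hmk; exact h7 hmk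
      have hg := gen7 11 (by norm_num) i (by omega) hfi
      norm_num at hg
      exact glue7 2097152 11390625 7 1 i j hmk htot 117649 279936 1771561 10000000
        (by rw [pow_one, tot7]; norm_num) hg (by norm_num) (by norm_num)
    · have hpb := ppow7 2097152 11390625 7 c 2 5 (by norm_num) (by norm_num) rfl hc2 (by norm_num)
      have hk := L0 i hi0 (fun q hq1 hq2 => by have := hfi q hq1 hq2; omega)
      exact glue7 2097152 11390625 7 c i j hmk htot 2097152 11390625 1 1 hpb
        (by simpa using hk) (by norm_num) (by norm_num)
  · by_cases hd11 : 11 ∣ j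
    · obtain ⟨c, i, hc, hmk, htot, hi0, him, hq⟩ := split7 11 j (by norm_num) (by omega) hd11
      have hfi : ∀ p, p.Prime → p ∣ i → 13 ≤ p := by
        intro p hp hpj
        obtain ⟨hpk, hpne⟩ := hq p hp hpj
        have h7' : ¬ (7 ∣ i) := fun hh => hd7 (hh.trans ?dvd)
        case dvd => exact (hmk ▸ Dvd.intro_left _ rfl)
        have := hf p hp hpk
        have hne7 : p ≠ 7 := by rintro rfl; exact h7' hpj
        rcases prime_cases7 p hp with rfl|rfl|rfl|rfl|rfl|h <;> omega
      obtain rfl | hc2 : c = 1 ∨ 2 ≤ c := by omega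
      · have hi1 : i ≠ 1 := by rintro rfl; simp at hmk; exact h11 hmk
        have hg := gen7 13 (by norm_num) i (by omega) hfi
        norm_num at hg
        exact glue7 2097152 11390625 11 1 i j hmk htot 1771561 10000000 4826809 35831808
          (by rw [pow_one, tot11]; norm_num) hg (by norm_num) (by norm_num)
      · have hpb := ppow7 2097152 11390625 11 c 2 5 (by norm_num) (by norm_num) rfl hc2 (by norm_num)
        have hk := L0 i hi0 (fun q hq1 hq2 => by have := hfi q hq1 hq2; omega)
        exact glue7 2097152 11390625 11 c i j hmk htot 2097152 11390625 1 1 hpb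
          (by simpa using hk) (by norm_num) (by norm_num)
    · have hfj : ∀ p, p.Prime → p ∣ j → 13 ≤ p := by
        intro p hp hpk
        have := hf p hp hpk
        have hne7 : p ≠ 7 := by rintro rfl; exact hd7 hpk
        have hne11 : p ≠ 11 := by rintro rfl; exact hd11 hpk
        rcases prime_cases7 p hp with rfl|rfl|rfl|rfl|rfl|h <;> omega
      have hg := gen7 13 (by norm_num) j (by omega) hfj
      norm_num at hg
      exact rescale7 2097152 11390625 4826809 35831808 _ _ hg (by norm_num) (by norm_num)

lemma Lb2 (k : ℕ) (h0 : 0 < k) (hf : ∀ p, p.Prime → p ∣ k → 5 ≤ p)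
    (h1 : k ≠ 1) (h5 : k ≠ 5) : 243 * k ^ 6 ≤ 128 * Nat.totient k ^ 7 := by
  by_cases hd5 : 5 ∣ k
  · obtain ⟨b, j, hb, hmk, htot, hj0, hjm, hq⟩ := split7 5 k (by norm_num) (by omega) hd5
    have hfj : ∀ p, p.Prime → p ∣ j → 7 ≤ p := by
      intro p hp hpj
      obtain ⟨hpk, hpne⟩ := hq p hp hpj
      have := hf p hp hpk
      rcases prime_cases7 p hp with rfl|rfl|rfl|rfl|rfl|h <;> omega
    obtain rfl | hb2 : b = 1 ∨ 2 ≤ b := by omega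
    · have hj1 : j ≠ 1 := by rintro rfl; simp at hmk; exact h5 hmk
      have hg := gen7 7 (by norm_num) j (by omega) hfj
      norm_num at hg
      exact glue7 128 243 5 1 j k hmk htot 15625 16384 117649 279936
        (by rw [pow_one, tot5]; norm_num) hg (by norm_num) (by norm_num)
    · have hpb := ppow7 128 243 5 b 2 5 (by norm_num) (by norm_num) rfl hb2 (by norm_num)
      have hk := L0 j hj0 (fun q hq1 hq2 => by have := hfj q hq1 hq2; omega)
      exact glue7 128 243 5 b j k hmk htot 128 243 1 1 hpb (by simpa using hk)
        (by norm_num) (by norm_num)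
  · have hfk : ∀ p, p.Prime → p ∣ k → 7 ≤ p := by
      intro p hp hpk
      have := hf p hp hpk
      have hne : p ≠ 5 := by rintro rfl; exact hd5 hpk
      rcases prime_cases7 p hp with rfl|rfl|rfl|rfl|rfl|h <;> omega
    have hg := gen7 7 (by norm_num) k (by omega) hfk
    norm_num at hg
    exact rescale7 128 243 117649 279936 _ _ hg (by norm_num) (by norm_num)

lemma Lb1 (k : ℕ) (h0 : 0 < k) (hf : ∀ p, p.Prime → p ∣ k → 5 ≤ p)
    (e1 : k ≠ 1) (e5 : k ≠ 5) (e7 : k ≠ 7) (e11 : k ≠ 11) (e25 : k ≠ 25)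
    (e35 : k ≠ 35) (e55 : k ≠ 55) (e65 : k ≠ 65) :
    729 * k ^ 6 ≤ 128 * Nat.totient k ^ 7 := by
  by_cases hd5 : 5 ∣ k
  · obtain ⟨b, j, hb, hmk, htot, hj0, hjm, hq⟩ := split7 5 k (by norm_num) (by omega) hd5
    have hfj : ∀ p, p.Prime → p ∣ j → 7 ≤ p := by
      intro p hp hpj
      obtain ⟨hpk, hpne⟩ := hq p hp hpj
      have := hf p hp hpk
      rcases prime_cases7 p hp with rfl|rfl|rfl|rfl|rfl|h <;> omega
    obtain rfl | rfl | hb3 : b = 1 ∨ b = 2 ∨ 3 ≤ b := by omega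
    · -- k = 5 * j, use N7
      have hj1 : j ≠ 1 := by rintro rfl; simp at hmk; exact e5 hmk
      have hj7 : j ≠ 7 := by rintro rfl; norm_num at hmk; exact e35 hmk
      have hj11 : j ≠ 11 := by rintro rfl; norm_num at hmk; exact e55 hmk
      have hg := N7 j hj0 hfj hj1 hj7 hj11
      exact glue7 128 729 5 1 j k hmk htot 15625 16384 2097152 11390625
        (by rw [pow_one, tot5]; norm_num) hg (by norm_num) (by norm_num)
    · -- k = 25 * j
      have hj1 : j ≠ 1 := by rintro rfl; norm_num at hmk; exact e25 hmk
      have hg := gen7 7 (by norm_num) j (by omega) hfj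
      norm_num at hg
      exact glue7 128 729 5 2 j k hmk htot 3125 16384 117649 279936
        (by norm_num [tot25]) hg (by norm_num) (by norm_num)
    · have hpb := ppow7 128 729 5 b 3 4 (by norm_num) (by norm_num) rfl hb3 (by norm_num)
      have hk := L0 j hj0 (fun q hq1 hq2 => by have := hfj q hq1 hq2; omega)
      exact glue7 128 729 5 b j k hmk htot 128 729 1 1 hpb (by simpa using hk)
        (by norm_num) (by norm_num)
  · by_cases hd7 : 7 ∣ k
    · obtain ⟨b, j, hb, hmk, htot, hj0, hjm, hq⟩ := split7 7 k (by norm_num) (by omega) hd7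
      have hfj : ∀ p, p.Prime → p ∣ j → 11 ≤ p := by
        intro p hp hpj
        obtain ⟨hpk, hpne⟩ := hq p hp hpj
        have := hf p hp hpk
        have hne5 : p ≠ 5 := by rintro rfl; exact hd5 hpk
        rcases prime_cases7 p hp with rfl|rfl|rfl|rfl|rfl|h <;> omega
      obtain rfl | hb2 : b = 1 ∨ 2 ≤ b := by omega
      · have hj1 : j ≠ 1 := by rintro rfl; simp at hmk; exact e7 hmk
        have hg := gen7 11 (by norm_num) j (by omega) hfj
        norm_num at hg
        exact glue7 128 729 7 1 j k hmk htot 117649 279936 1771561 10000000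
          (by rw [pow_one, tot7]; norm_num) hg (by norm_num) (by norm_num)
      · have hpb := ppow7 128 729 7 b 2 5 (by norm_num) (by norm_num) rfl hb2 (by norm_num)
        have hk := L0 j hj0 (fun q hq1 hq2 => by have := hfj q hq1 hq2; omega)
        exact glue7 128 729 7 b j k hmk htot 128 729 1 1 hpb (by simpa using hk)
          (by norm_num) (by norm_num)
    · by_cases hd11 : 11 ∣ k
      · obtain ⟨b, j, hb, hmk, htot, hj0, hjm, hq⟩ := split7 11 k (by norm_num) (by omega) hd11
        have hfj : ∀ p, p.Prime → p ∣ j → 13 ≤ p := by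
          intro p hp hpj
          obtain ⟨hpk, hpne⟩ := hq p hp hpj
          have := hf p hp hpk
          have hne5 : p ≠ 5 := by rintro rfl; exact hd5 hpk
          have hne7 : p ≠ 7 := by rintro rfl; exact hd7 hpk
          rcases prime_cases7 p hp with rfl|rfl|rfl|rfl|rfl|h <;> omega
        obtain rfl | hb2 : b = 1 ∨ 2 ≤ b := by omega
        · have hj1 : j ≠ 1 := by rintro rfl; simp at hmk; exact e11 hmk
          have hg := gen7 13 (by norm_num) j (by omega) hfj
          norm_num at hg
          exact glue7 128 729 11 1 j k hmk htot 1771561 10000000 4826809 35831808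
            (by rw [pow_one, tot11]; norm_num) hg (by norm_num) (by norm_num)
        · have hpb := ppow7 128 729 11 b 2 5 (by norm_num) (by norm_num) rfl hb2 (by norm_num)
          have hk := L0 j hj0 (fun q hq1 hq2 => by have := hfj q hq1 hq2; omega)
          exact glue7 128 729 11 b j k hmk htot 128 729 1 1 hpb (by simpa using hk)
            (by norm_num) (by norm_num)
      · have hfk : ∀ p, p.Prime → p ∣ k → 13 ≤ p := by
          intro p hp hpk
          have := hf p hp hpk
          have hne5 : p ≠ 5 := by rintro rfl; exact hd5 hpk
          have hne7 : p ≠ 7 := by rintro rfl; exact hd7 hpk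
          have hne11 : p ≠ 11 := by rintro rfl; exact hd11 hpk
          rcases prime_cases7 p hp with rfl|rfl|rfl|rfl|rfl|h <;> omega
        have hg := gen7 13 (by norm_num) k (by omega) hfk
        norm_num at hg
        exact rescale7 128 729 4826809 35831808 _ _ hg (by norm_num) (by norm_num)

theorem totient_pow_seven_ge (n : ℕ) (hn : 0 < n) (hodd : Odd n)
    (hn' : n ∉ ({1, 3, 9, 15, 21, 33, 45, 75, 105, 165, 195} : Finset ℕ)) :
    (Nat.totient n) ^ 7 ≥ n ^ 6 := by
  have h2 : ¬ 2 ∣ n := by rw [Nat.odd_iff] at hodd; omega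
  by_cases h3 : 3 ∣ n
  · obtain ⟨b, k, hb, hmk, htot, hk0, hkm, hq⟩ := split7 3 n (by norm_num) (by omega) h3
    have hfk : ∀ p, p.Prime → p ∣ k → 5 ≤ p := by
      intro p hp hpk
      obtain ⟨hpn, hpne⟩ := hq p hp hpk
      have hne2 : p ≠ 2 := by rintro rfl; exact h2 hpn
      rcases prime_cases7 p hp with rfl|rfl|rfl|rfl|rfl|h <;> omega
    have hex : ∀ c : ℕ, n = c → c ∈ ({1, 3, 9, 15, 21, 33, 45, 75, 105, 165, 195} : Finset ℕ) → False := by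
      rintro c rfl hc; exact hn' hc
    rw [ge_iff_le]
    obtain rfl | rfl | hb3 : b = 1 ∨ b = 2 ∨ 3 ≤ b := by omega
    · -- n = 3 * k
      have hLb1 := Lb1 k hk0 hfk
        (by rintro rfl; exact hex 3 (by omega) (by decide))
        (by rintro rfl; exact hex 15 (by omega) (by decide))
        (by rintro rfl; exact hex 21 (by omega) (by decide))
        (by rintro rfl; exact hex 33 (by omega) (by decide))
        (by rintro rfl; exact hex 75 (by omega) (by decide))
        (by rintro rfl; exact hex 105 (by omega) (by decide))
        (by rintro rfl; exact hex 165 (by omega) (by decide))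
        (by rintro rfl; exact hex 195 (by omega) (by decide))
      have := glue7 1 1 3 1 k n hmk htot 729 128 128 729
        (by rw [pow_one, tot3]; norm_num) hLb1 (by norm_num) (by norm_num)
      simpa using this
    · -- n = 9 * k
      have hLb2 := Lb2 k hk0 hfk
        (by rintro rfl; exact hex 9 (by omega) (by decide))
        (by rintro rfl; exact hex 45 (by omega) (by decide))
      have := glue7 1 1 3 2 k n hmk htot 531441 279936 128 243
        (by norm_num [show Nat.totient 9 = 6 by decide]) hLb2
        (by norm_num) (by norm_num)
      simpa using this
    · have hpb := ppow7 1 1 3 b 3 4 (by norm_num) (by norm_num) rfl hb3 (by norm_num)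
      have hk := L0 k hk0 hfk
      have := glue7 1 1 3 b k n hmk htot 1 1 1 1 hpb (by simpa using hk)
        (by norm_num) (by norm_num)
      simpa using this
  · have hfn : ∀ p, p.Prime → p ∣ n → 5 ≤ p := by
      intro p hp hpn
      have hne2 : p ≠ 2 := by rintro rfl; exact h2 hpn
      have hne3 : p ≠ 3 := by rintro rfl; exact h3 hpn
      rcases prime_cases7 p hp with rfl|rfl|rfl|rfl|rfl|h <;> omega
    exact L0 n hn hfn
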